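/- Let (S,𝔖,μ) and (T,𝔗,ν) be measure spaces over σ-rings. Then the pair (𝔖 ⊗ 𝔗, 𝔖^σ ⊗ 𝔗^σ) has the simple extension property: any set C ∈ 𝔖 ⊗ 𝔗 contained in a set of 𝔖^σ ⊗ 𝔗^σ belongs to 𝔖^σ ⊗ 𝔗^σ. -/
import Mathlib


open Set ENNReal

/-- A family of sets is a σ-ring if it contains `∅` and is closed under
set differences and countable unions. -/
def IsSigmaRing {α : Type*} (C : Set (Set α)) : Prop :=
  ∅ ∈ C ∧ (∀ A B : Set α, A ∈ C → B ∈ C → A \ B ∈ C) ∧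
    ∀ f : ℕ → Set α, (∀ n, f n ∈ C) → (⋃ n, f n) ∈ C

/-- The σ-ring generated by a family of sets. -/
def genSR {α : Type*} (D : Set (Set α)) : Set (Set α) :=
  ⋂₀ {C | IsSigmaRing C ∧ D ⊆ C}

/-- A measure on a σ-ring: countably additive, vanishing on `∅`. -/
def IsMeasure {α : Type*} (C : Set (Set α)) (μ : Set α → ℝ≥0∞) : Prop :=
  μ ∅ = 0 ∧ ∀ f : ℕ → Set α, (∀ n, f n ∈ C) →
    Pairwise (Function.onFun Disjoint f) → μ (⋃ n, f n) = ∑' n, μ (f n)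

/-- The family of μ-σ-finite sets: countable unions of sets of finite measure. -/
def sigmaFin {α : Type*} (C : Set (Set α)) (μ : Set α → ℝ≥0∞) : Set (Set α) :=
  {A | ∃ g : ℕ → Set α, (∀ n, g n ∈ C ∧ μ (g n) < ⊤) ∧ A = ⋃ n, g n}

/-- Restriction of a family of sets to a set `S`. -/
def restrictFam {α : Type*} (D : Set (Set α)) (S : Set α) : Set (Set α) :=
  (fun A => A ∩ S) '' D

/-- The product σ-ring, generated by measurable rectangles. -/
def prodSR {α β : Type*} (S : Set (Set α)) (T : Set (Set β)) : Set (Set (α × β)) :=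
  genSR {R | ∃ A ∈ S, ∃ B ∈ T, R = A ×ˢ B}

/-- The σ-algebra generated by a family of sets. -/
def genSA {α : Type*} (D : Set (Set α)) : MeasurableSpace α :=
  MeasurableSpace.generateFrom D

/-- The (extended) Lebesgue integral of a nonnegative function with respect to a
measure on a σ-ring, as the supremum of integrals of simple functions below it. -/
noncomputable def lintSR {α : Type*} (C : Set (Set α)) (μ : Set α → ℝ≥0∞)
    (f : α → ℝ≥0∞) : ℝ≥0∞ :=
  ⨆ (n : ℕ) (c : Fin n → ℝ≥0∞) (A : Fin n → Set α) (_ : ∀ i, A i ∈ C)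
    (_ : ∀ x, (∑ i, (A i).indicator (fun _ => c i) x) ≤ f x),
    ∑ i, c i * μ (A i)

/-- The positive part of an extended real, as an `ℝ≥0∞`. -/
noncomputable def epos (x : EReal) : ℝ≥0∞ := (x ⊔ 0).abs

/-- Measurability of an extended-real function with respect to a σ-ring:
measurable for the generated σ-algebra, with support in the σ-ring. -/
def SRMeasurableE {α : Type*} (C : Set (Set α)) (f : α → EReal) : Prop :=
  @Measurable α EReal (genSA C) _ f ∧ {x | f x ≠ 0} ∈ C

/-- The Lebesgue integral of an extended-real function w.r.t. a measure on a σ-ring. -/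
noncomputable def integralE {α : Type*} (C : Set (Set α)) (μ : Set α → ℝ≥0∞)
    (f : α → EReal) : EReal :=
  ((lintSR C μ fun x => epos (f x) : ℝ≥0∞) : EReal) -
    ((lintSR C μ fun x => epos (-f x) : ℝ≥0∞) : EReal)

/-- Integrability of an extended-real function w.r.t. a measure on a σ-ring. -/
def IntegrableE {α : Type*} (C : Set (Set α)) (μ : Set α → ℝ≥0∞)
    (f : α → EReal) : Prop :=
  SRMeasurableE C f ∧ lintSR C μ (fun x => (f x).abs) < ⊤

/-- `lam` is the product of the measures `μ` and `ν` on σ-rings `S`, `T`: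
the unique measure on the product σ-ring whose σ-finite component is the Halmos
product of the σ-finite components. -/
def IsProdMeasure {α β : Type*} (S : Set (Set α)) (T : Set (Set β))
    (μ : Set α → ℝ≥0∞) (ν : Set β → ℝ≥0∞) (lam : Set (α × β) → ℝ≥0∞) : Prop :=
  IsMeasure (prodSR S T) lam ∧
  (∀ A ∈ S, ∀ B ∈ T, μ A < ⊤ → ν B < ⊤ → lam (A ×ˢ B) = μ A * ν B) ∧
  sigmaFin (prodSR S T) lam =
    genSR {R | ∃ A ∈ S, ∃ B ∈ T, μ A < ⊤ ∧ ν B < ⊤ ∧ R = A ×ˢ B}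

lemma subset_genSR {α : Type*} (D : Set (Set α)) : D ⊆ genSR D := by
  intro A hA C hC; exact hC.2 hA

lemma genSR_subset {α : Type*} {D C : Set (Set α)} (hC : IsSigmaRing C) (h : D ⊆ C) :
    genSR D ⊆ C := fun A hA => hA C ⟨hC, h⟩

lemma isSigmaRing_genSR {α : Type*} (D : Set (Set α)) : IsSigmaRing (genSR D) := by
  refine ⟨fun C hC => hC.1.1, fun A B hA hB C hC => hC.1.2.1 A B (hA C hC) (hB C hC),
    fun f hf C hC => hC.1.2.2 f (fun n => hf n C hC)⟩

lemma measure_mono {α : Type*} {S : Set (Set α)} {μ : Set α → ℝ≥0∞}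
    (hS : IsSigmaRing S) (hμ : IsMeasure S μ) {E F : Set α}
    (hE : E ∈ S) (hF : F ∈ S) (h : E ⊆ F) : μ E ≤ μ F := by
  set f : ℕ → Set α := fun n => if n = 0 then E else if n = 1 then F \ E else ∅ with hfdef
  have hmem : ∀ n, f n ∈ S := by
    intro n; simp only [hfdef]
    split_ifs with h1 h2
    · exact hE
    · exact hS.2.1 _ _ hF hE
    · exact hS.1
  have hdisj : Pairwise (Function.onFun Disjoint f) := by
    intro i j hij
    simp only [Function.onFun, hfdef]
    split_ifs with h1 h2 h3 h4 h5 h6 <;>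
      first
      | exact disjoint_sdiff_right
      | exact disjoint_sdiff_left
      | simp_all
      | exact disjoint_empty _
      | exact empty_disjoint _
  have hunion : (⋃ n, f n) = F := by
    apply subset_antisymm
    · apply iUnion_subset; intro n; simp only [hfdef]
      split_ifs with h1 h2
      · exact h
      · exact diff_subset
      · exact empty_subset _
    · intro x hx
      by_cases hxE : x ∈ E
      · exact mem_iUnion.2 ⟨0, by simpa [hfdef] using hxE⟩
      · exact mem_iUnion.2 ⟨1, by simp [hfdef, hx, hxE]⟩
  have := hμ.2 f hmem hdisj
  rw [hunion] at this
  rw [this]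
  calc μ E = μ (f 0) := by simp [hfdef]
    _ ≤ ∑' n, μ (f n) := ENNReal.le_tsum 0

lemma sigmaFin_iUnion {α : Type*} {S : Set (Set α)} {μ : Set α → ℝ≥0∞}
    (f : ℕ → Set α) (hf : ∀ n, f n ∈ sigmaFin S μ) : (⋃ n, f n) ∈ sigmaFin S μ := by
  choose g hg hfg using hf
  refine ⟨fun k => g (Nat.unpair k).1 (Nat.unpair k).2,
    fun k => hg _ _, ?_⟩
  apply subset_antisymm
  · intro x hx
    obtain ⟨n, hn⟩ := mem_iUnion.1 hx
    rw [hfg n] at hn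
    obtain ⟨m, hm⟩ := mem_iUnion.1 hn
    exact mem_iUnion.2 ⟨Nat.pair n m, by simpa [Nat.unpair_pair] using hm⟩
  · intro x hx
    obtain ⟨k, hk⟩ := mem_iUnion.1 hx
    refine mem_iUnion.2 ⟨(Nat.unpair k).1, ?_⟩
    rw [hfg]; exact mem_iUnion.2 ⟨(Nat.unpair k).2, hk⟩

lemma inter_sigmaFin {α : Type*} {S : Set (Set α)} {μ : Set α → ℝ≥0∞}
    (hS : IsSigmaRing S) (hμ : IsMeasure S μ) {A' A : Set α}
    (hA' : A' ∈ S) (hA : A ∈ sigmaFin S μ) : A' ∩ A ∈ sigmaFin S μ := by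
  obtain ⟨g, hg, rfl⟩ := hA
  refine ⟨fun n => A' ∩ g n, fun n => ?_, by rw [inter_iUnion]⟩
  have hmem : A' ∩ g n ∈ S := by
    have : A' ∩ g n = A' \ (A' \ g n) := by ext x; simp
    rw [this]; exact hS.2.1 _ _ hA' (hS.2.1 _ _ hA' (hg n).1)
  exact ⟨hmem, lt_of_le_of_lt (measure_mono hS hμ hmem (hg n).1 inter_subset_right) (hg n).2⟩

lemma genSR_cover {α : Type*} {G : Set (Set α)} (hG : ∅ ∈ G) {E : Set α}
    (hE : E ∈ genSR G) : ∃ f : ℕ → Set α, (∀ n, f n ∈ G) ∧ E ⊆ ⋃ n, f n := by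
  have : genSR G ⊆ {E | ∃ f : ℕ → Set α, (∀ n, f n ∈ G) ∧ E ⊆ ⋃ n, f n} := by
    apply genSR_subset
    · refine ⟨⟨fun _ => ∅, fun _ => hG, empty_subset _⟩, ?_, ?_⟩
      · rintro A B ⟨f, hf, hsub⟩ _
        exact ⟨f, hf, diff_subset.trans hsub⟩
      · rintro u hu
        choose f hf hsub using hu
        refine ⟨fun k => f (Nat.unpair k).1 (Nat.unpair k).2, fun k => hf _ _, ?_⟩
        intro x hx
        obtain ⟨n, hn⟩ := mem_iUnion.1 hx
        obtain ⟨m, hm⟩ := mem_iUnion.1 (hsub n hn)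
        exact mem_iUnion.2 ⟨Nat.pair n m, by simpa [Nat.unpair_pair] using hm⟩
    · intro X hX
      exact ⟨fun n => if n = 0 then X else ∅, fun n => by by_cases h : n = 0 <;> simp [h, hX, hG],
        fun x hx => mem_iUnion.2 ⟨0, by simpa using hx⟩⟩
  exact this hE

/-- the pair `(𝔖 ⊗ 𝔗, 𝔖^σ ⊗ 𝔗^σ)` has the simple extension
property. -/
theorem stmt_8 {α β : Type*} (S : Set (Set α)) (T : Set (Set β))
    (μ : Set α → ℝ≥0∞) (ν : Set β → ℝ≥0∞)
    (hS : IsSigmaRing S) (hT : IsSigmaRing T)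
    (hμ : IsMeasure S μ) (hν : IsMeasure T ν) :
    ∀ C ∈ prodSR S T, ∀ D ∈ prodSR (sigmaFin S μ) (sigmaFin T ν),
      C ⊆ D → C ∈ prodSR (sigmaFin S μ) (sigmaFin T ν) := by
  intro C hC D hD hCD
  have hemptyσS : (∅ : Set α) ∈ sigmaFin S μ :=
    ⟨fun _ => ∅, fun n => ⟨hS.1, by simp [hμ.1]⟩, by simp⟩
  have hemptyσT : (∅ : Set β) ∈ sigmaFin T ν :=
    ⟨fun _ => ∅, fun n => ⟨hT.1, by simp [hν.1]⟩, by simp⟩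
  have hG0 : (∅ : Set (α × β)) ∈
      {R | ∃ A ∈ sigmaFin S μ, ∃ B ∈ sigmaFin T ν, R = A ×ˢ B} :=
    ⟨∅, hemptyσS, ∅, hemptyσT, by simp⟩
  obtain ⟨f, hf, hDsub⟩ := genSR_cover hG0 hD
  choose A hA B hB hfAB using hf
  set A0 := ⋃ n, A n with hA0def
  set B0 := ⋃ n, B n with hB0def
  have hA0 : A0 ∈ sigmaFin S μ := sigmaFin_iUnion A hA
  have hB0 : B0 ∈ sigmaFin T ν := sigmaFin_iUnion B hB
  have hCsub : C ⊆ A0 ×ˢ B0 := by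
    refine hCD.trans (hDsub.trans ?_)
    apply iUnion_subset; intro n; rw [hfAB n]
    exact prod_mono (subset_iUnion A n) (subset_iUnion B n)
  have key : prodSR S T ⊆
      {E | E ∩ (A0 ×ˢ B0) ∈ prodSR (sigmaFin S μ) (sigmaFin T ν)} := by
    apply genSR_subset
    · refine ⟨?_, ?_, ?_⟩
      · simp only [mem_setOf_eq, empty_inter]; exact subset_genSR _ hG0
      · intro E F hE hF
        simp only [mem_setOf_eq] at *
        have heq : (E \ F) ∩ (A0 ×ˢ B0) = (E ∩ (A0 ×ˢ B0)) \ (F ∩ (A0 ×ˢ B0)) := by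
          ext x; simp; tauto
        rw [heq]
        exact (isSigmaRing_genSR _).2.1 _ _ hE hF
      · intro g hg
        simp only [mem_setOf_eq] at *
        rw [iUnion_inter]
        exact (isSigmaRing_genSR _).2.2 _ hg
    · rintro R ⟨A', hA', B', hB', rfl⟩
      simp only [mem_setOf_eq]
      rw [prod_inter_prod]
      exact subset_genSR _
        ⟨A' ∩ A0, inter_sigmaFin hS hμ hA' hA0, B' ∩ B0, inter_sigmaFin hT hν hB' hB0, rfl⟩
  have h := key hC
  simp only [mem_setOf_eq] at h
  rwa [inter_eq_left.2 hCsub] at h
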